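/- arXiv:2603.05501 — 4 statements merged into one kernel-verified Lean document; each statement's English description precedes it below -/
import Mathlib

section
/- Let C and D be team properties, each having the empty team, and suppose D is quasi upward closed. Then the split-disjunction property {T | ∃ T₁ T₂, T₁ ∪ T₂ = T ∧ T₁ ∈ C ∧ T₂ ∈ D} equals the union C ∪ D. -/
def QuasiUpwardClosed {P : Type} (C : Set (Set (P → Bool))) : Prop :=
  (∅ : Set (P → Bool)) ∈ C ∧
    ∀ T ∈ C, T ≠ ∅ → ∀ S : Set (P → Bool), T ⊆ S → S ∈ C

theorem split_disjunction_eq_union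
    (P : Type) [Fintype P] (C D : Set (Set (P → Bool)))
    (hCe : (∅ : Set (P → Bool)) ∈ C)
    (hD : QuasiUpwardClosed D) :
    {T : Set (P → Bool) | ∃ T₁ T₂, T₁ ∪ T₂ = T ∧ T₁ ∈ C ∧ T₂ ∈ D} = C ∪ D := by
  ext T
  constructor
  · rintro ⟨T₁, T₂, rfl, h1, h2⟩
    by_cases h : T₂ = ∅
    · left; simpa [h] using h1
    · right; exact hD.2 T₂ h2 h _ Set.subset_union_right
  · rintro (h | h)
    · exact ⟨T, ∅, by simp, h, hD.1⟩
    · exact ⟨∅, T, by simp, hCe, h⟩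
end

section
/- For team properties C, D with D quasi upward closed and both containing the empty team, the strict split-disjunction {T | ∃ T₁ T₂, T₁ ∩ T₂ = ∅ ∧ T₁ ∪ T₂ = T ∧ T₁ ∈ C ∧ T₂ ∈ D} equals C ∪ D. -/
theorem strict_split_disjunction_eq_union
    (P : Type) [Fintype P] (C D : Set (Set (P → Bool)))
    (hCe : (∅ : Set (P → Bool)) ∈ C)
    (hD : QuasiUpwardClosed D) :
    {T : Set (P → Bool) |
        ∃ T₁ T₂, T₁ ∩ T₂ = ∅ ∧ T₁ ∪ T₂ = T ∧ T₁ ∈ C ∧ T₂ ∈ D} = C ∪ D := by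
  ext T
  constructor
  · rintro ⟨T₁, T₂, _, rfl, h₁, h₂⟩
    by_cases h : T₂ = ∅
    · left; simpa [h] using h₁
    · right
      exact hD.2 T₂ h₂ h _ Set.subset_union_right
  · rintro (h | h)
    · exact ⟨T, ∅, by simp, by simp, h, hD.1⟩
    · exact ⟨∅, T, by simp, by simp, hCe, h⟩
end

section
/- Every quasi upward closed team property C over a finite set P containing a nonempty team is definable by a normal form: C = {∅} ∪ ⋃_{T ∈ C, T ≠ ∅} ({∅} ∪ {S | S ⊇ T}). -/
theorem quasi_upward_closed_normal_form
    (P : Type) [Fintype P] (C : Set (Set (P → Bool)))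
    (hCe : (∅ : Set (P → Bool)) ∈ C)
    (hC : ∀ T ∈ C, T ≠ ∅ → ∀ S : Set (P → Bool), T ⊆ S → S ∈ C)
    (hne : ∃ T ∈ C, T ≠ ∅) :
    C = {(∅ : Set (P → Bool))} ∪
        ⋃ T ∈ {T ∈ C | T ≠ ∅},
          ({(∅ : Set (P → Bool))} ∪ {S : Set (P → Bool) | T ⊆ S}) := by
  ext S
  simp only [Set.mem_union, Set.mem_iUnion, Set.mem_singleton_iff, Set.mem_setOf_eq,
    Set.mem_sep_iff, exists_prop]
  constructor
  · intro hS
    by_cases h : S = ∅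
    · left; exact h
    · right; exact ⟨S, ⟨hS, h⟩, Or.inr subset_rfl⟩
  · rintro (rfl | ⟨T, ⟨hT, hTne⟩, rfl | hsub⟩)
    · exact hCe
    · exact hCe
    · exact hC T hT hTne S hsub
end

section
/- The rule ⊛⊆Ext is sound: if a team T over finite P satisfies p ⊛⊆ x, then for any propositional symbol q not occurring in p, T can be split as T = T₁ ∪ T₂ with T₁ ⊨ pq ⊛⊆ x⊤ and T₂ ⊨ pq ⊛⊆ x⊥. -/
/-- `T ⊨ p ⊛⊆ x`: `T` is the full team, or every `v ∈ T` agrees with `x` on `p`. -/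
def SatFullDualPrimIncl {P : Type} (T : Set (P → Bool)) {n : ℕ}
    (p : Fin n → P) (x : Fin n → Bool) : Prop :=
  T = Set.univ ∨ ∀ v ∈ T, ∀ i, v (p i) = x i

theorem full_dual_ext_sound
    (P : Type) [Fintype P] (n : ℕ) (p : Fin n → P) (x : Fin n → Bool)
    (q : P) (hq : ∀ i, p i ≠ q)
    (T : Set (P → Bool)) (hT : SatFullDualPrimIncl T p x) :
    ∃ T₁ T₂ : Set (P → Bool), T₁ ∪ T₂ = T ∧
      SatFullDualPrimIncl T₁ (Fin.snoc p q) (Fin.snoc x true) ∧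
      SatFullDualPrimIncl T₂ (Fin.snoc p q) (Fin.snoc x false) := by
  rcases hT with h | h
  · exact ⟨Set.univ, Set.univ, by simp [h], Or.inl rfl, Or.inl rfl⟩
  · refine ⟨{v ∈ T | v q = true}, {v ∈ T | v q = false}, ?_, Or.inr ?_, Or.inr ?_⟩
    · ext v; by_cases hv : v q = true <;> simp [hv]
    all_goals
      rintro v ⟨hvT, hvq⟩ i
      refine Fin.lastCases ?_ (fun j => ?_) i
      · simpa using hvq
      · simpa using h v hvT j
end
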